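/- Let s ≥ 1 and let α_{i,j} ≥ 0, β_{i,j} ≥ 0 (1 ≤ i ≤ s, 0 ≤ j ≤ i−1) satisfy Σ_{j=0}^{i−1} α_{i,j} = 1 for each i and β_{i,j} = 0 whenever α_{i,j} = 0. Suppose F : E → E satisfies the forward-Euler condition with step bound h_FE > 0. Given u^n ∈ E and Δt ≥ 0 with β_{i,j} Δt ≤ α_{i,j} h_FE for all i, j (i.e. Δt ≤ C h_FE with C = min_{β_{i,j}≠0} α_{i,j}/β_{i,j}), define the Shu–Osher explicit Runge–Kutta stages u^{(0)} = u^n and u^{(i)} = Σ_{j=0}^{i−1} (α_{i,j} • u^{(j)} + (Δt β_{i,j}) • F(u^{(j)})) for i = 1, …, s, with u^{n+1} = u^{(s)}. Then f(u^{(i)}) ≤ f(u^n) for every i = 0, 1, …, s; in particular f(u^{n+1}) ≤ f(u^n). -/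

import Mathlib

/-- **Strong stability preservation of explicit Runge–Kutta methods in
Shu–Osher form.**  If the coefficients satisfy `α i j, β i j ≥ 0`,
`∑_{j<i} α i j = 1`, and `β i j = 0` whenever `α i j = 0`, `F` satisfies the
forward-Euler condition with step bound `hFE > 0`, and
`β i j * Δt ≤ α i j * hFE` for all stages, then every stage of the Shu–Osher
explicit Runge–Kutta method satisfies `f (U i) ≤ f uⁿ`; in particular the
update `uⁿ⁺¹ = U s` satisfies `f uⁿ⁺¹ ≤ f uⁿ`. -/
theorem ssp_shuOsher_rungeKutta
    {E : Type*} [NormedAddCommGroup E] [NormedSpace ℝ E] [FiniteDimensional ℝ E]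
    (f : E → ℝ) (hf_cont : Continuous f) (hf_conv : ConvexOn ℝ Set.univ f)
    (F : E → E)
    (hFE : ℝ) (hFE_pos : 0 < hFE)
    (hF : ∀ u : E, ∀ τ : ℝ, 0 ≤ τ → τ ≤ hFE → f (u + τ • F u) ≤ f u)
    (s : ℕ) (hs : 1 ≤ s)
    (α β : ℕ → ℕ → ℝ)
    (hα_nonneg : ∀ i j, 1 ≤ i → i ≤ s → j < i → 0 ≤ α i j)
    (hβ_nonneg : ∀ i j, 1 ≤ i → i ≤ s → j < i → 0 ≤ β i j)
    (hα_sum : ∀ i, 1 ≤ i → i ≤ s → ∑ j ∈ Finset.range i, α i j = 1)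
    (hβ_zero : ∀ i j, 1 ≤ i → i ≤ s → j < i → α i j = 0 → β i j = 0)
    (un : E) (Δt : ℝ) (hΔt : 0 ≤ Δt)
    (hstep : ∀ i j, 1 ≤ i → i ≤ s → j < i → β i j * Δt ≤ α i j * hFE)
    (U : ℕ → E) (hU0 : U 0 = un)
    (hU : ∀ i, 1 ≤ i → i ≤ s →
      U i = ∑ j ∈ Finset.range i, (α i j • U j + (Δt * β i j) • F (U j))) :
    (∀ i, i ≤ s → f (U i) ≤ f un) ∧ f (U s) ≤ f un := by
  have main : ∀ i, i ≤ s → f (U i) ≤ f un := by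
    intro i
    induction i using Nat.strong_induction_on with
    | _ i ih =>
      intro his
      rcases Nat.eq_zero_or_pos i with rfl | hi1
      · rw [hU0]
      · -- stage vectors
        set v : ℕ → E := fun j => if α i j = 0 then U j
          else U j + (Δt * β i j / α i j) • F (U j) with hv
        have hterm : ∀ j ∈ Finset.range i,
            α i j • U j + (Δt * β i j) • F (U j) = α i j • v j := by
          intro j hj
          rw [Finset.mem_range] at hj
          by_cases h : α i j = 0
          · simp [hv, h, hβ_zero i j hi1 his hj h]
          · simp only [hv, if_neg h, smul_add, smul_smul]
            rw [mul_div_cancel₀ _ h]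
        have hUi : U i = ∑ j ∈ Finset.range i, α i j • v j := by
          rw [hU i hi1 his]; exact Finset.sum_congr rfl hterm
        have hfv : ∀ j ∈ Finset.range i, f (v j) ≤ f un := by
          intro j hj
          rw [Finset.mem_range] at hj
          have hUj : f (U j) ≤ f un := ih j hj (le_of_lt (lt_of_lt_of_le hj his))
          by_cases h : α i j = 0
          · simpa [hv, h] using hUj
          · have hαpos : 0 < α i j := (hα_nonneg i j hi1 his hj).lt_of_ne' h
            have hτ0 : 0 ≤ Δt * β i j / α i j :=
              div_nonneg (mul_nonneg hΔt (hβ_nonneg i j hi1 his hj)) hαpos.le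
            have hτle : Δt * β i j / α i j ≤ hFE := by
              rw [div_le_iff₀ hαpos]
              calc Δt * β i j = β i j * Δt := mul_comm _ _
                _ ≤ α i j * hFE := hstep i j hi1 his hj
                _ = hFE * α i j := mul_comm _ _
            calc f (v j) = f (U j + (Δt * β i j / α i j) • F (U j)) := by
                  rw [hv]; simp [h]
              _ ≤ f (U j) := hF _ _ hτ0 hτle
              _ ≤ f un := hUj
        have hjensen := hf_conv.map_sum_le
          (fun j hj => hα_nonneg i j hi1 his (Finset.mem_range.mp hj))
          (hα_sum i hi1 his) (fun j _ => Set.mem_univ (v j))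
        rw [hUi]
        refine hjensen.trans ?_
        calc ∑ j ∈ Finset.range i, α i j • f (v j)
            ≤ ∑ j ∈ Finset.range i, α i j * f un := by
              refine Finset.sum_le_sum fun j hj => ?_
              exact mul_le_mul_of_nonneg_left (hfv j hj)
                (hα_nonneg i j hi1 his (Finset.mem_range.mp hj))
          _ = f un := by rw [← Finset.sum_mul, hα_sum i hi1 his, one_mul]
  exact ⟨main, main s le_rfl⟩
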